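/- Let A be a bal-algebra and let I, J be proper archimedean ℓ-ideals of A with I ⊄ J. Then there exists a proper archimedean ℓ-ideal K of A with J ⊆ K and K + I = A. -/

import Mathlib

/-- A bounded archimedean ℓ-algebra (bal-algebra): a commutative ℝ-algebra with a
lattice order compatible with addition and multiplication, in which the algebra
map from ℝ is order-preserving, `1` is a strong order unit, and the order is
archimedean. -/
structure IsBal (A : Type*) [CommRing A] [Lattice A] [Algebra ℝ A] : Prop where
  add_le_add_right : ∀ a b : A, a ≤ b → ∀ c : A, a + c ≤ b + c
  mul_nonneg : ∀ a b : A, 0 ≤ a → 0 ≤ b → 0 ≤ a * b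
  algebraMap_mono : Monotone (algebraMap ℝ A)
  strong_unit : ∀ a : A, ∃ n : ℕ, 1 ≤ n ∧ a ≤ n • (1 : A)
  arch : ∀ a b : A, (∀ n : ℕ, 1 ≤ n → n • a ≤ b) → a ≤ 0

/-- An ℓ-ideal: a ring ideal `I` such that `|a| ≤ |b|` and `b ∈ I` imply `a ∈ I`,
where `|a| = a ⊔ (-a)`. -/
def IsLIdeal {A : Type*} [CommRing A] [Lattice A] (I : Ideal A) : Prop :=
  ∀ a b : A, b ∈ I → a ⊔ -a ≤ b ⊔ -b → a ∈ I

/-- An archimedean ℓ-ideal: whenever `(n • a - b)⁺ ∈ I` for every integer `n ≥ 1`,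
also `a⁺ ∈ I`, where `x⁺ = x ⊔ 0`. -/
def IsArchLIdeal {A : Type*} [CommRing A] [Lattice A] (I : Ideal A) : Prop :=
  ∀ a b : A, (∀ n : ℕ, 1 ≤ n → (n • a - b) ⊔ 0 ∈ I) → a ⊔ 0 ∈ I

/-- The archimedean hull of a subset `S`: the intersection of all archimedean
ℓ-ideals containing `S`. -/
def archHull {A : Type*} [CommRing A] [Lattice A] (S : Set A) : Ideal A :=
  sInf {I : Ideal A | IsLIdeal I ∧ IsArchLIdeal I ∧ S ⊆ ↑I}

namespace BalAux
variable {A : Type*} [CommRing A] [Lattice A] [Algebra ℝ A]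

theorem cov (hA : IsBal A) : CovariantClass A A (· + ·) (· ≤ ·) :=
  ⟨fun c a b h => by simpa [add_comm] using hA.add_le_add_right a b h c⟩

theorem cov' (hA : IsBal A) : CovariantClass A A (Function.swap (· + ·)) (· ≤ ·) :=
  ⟨fun c a b h => hA.add_le_add_right a b h c⟩

theorem one_nonneg (hA : IsBal A) : (0 : A) ≤ 1 := by
  simpa using hA.algebraMap_mono (zero_le_one (α := ℝ))

theorem algebraMap_nonneg (hA : IsBal A) {r : ℝ} (hr : 0 ≤ r) : 0 ≤ algebraMap ℝ A r := by
  simpa using hA.algebraMap_mono hr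

theorem smul_nonneg (hA : IsBal A) {r : ℝ} (hr : 0 ≤ r) {a : A} (ha : 0 ≤ a) : 0 ≤ r • a := by
  rw [Algebra.smul_def]
  exact hA.mul_nonneg _ _ (algebraMap_nonneg hA hr) ha

theorem smul_le (hA : IsBal A) {r : ℝ} (hr : 0 ≤ r) {a b : A} (h : a ≤ b) : r • a ≤ r • b := by
  haveI := cov hA
  have := smul_nonneg hA hr (sub_nonneg.2 h)
  rw [smul_sub] at this
  exact sub_nonneg.1 this

theorem smul_cancel (hA : IsBal A) {r : ℝ} (hr : 0 < r) {a b : A} (h : r • a ≤ r • b) : a ≤ b := by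
  have := smul_le hA (le_of_lt (inv_pos.2 hr)) h
  rwa [smul_smul, smul_smul, inv_mul_cancel₀ hr.ne', one_smul, one_smul] at this

theorem smul_sup (hA : IsBal A) {r : ℝ} (hr : 0 < r) (a b : A) : r • (a ⊔ b) = r • a ⊔ r • b := by
  refine le_antisymm ?_ (sup_le (smul_le hA hr.le le_sup_left) (smul_le hA hr.le le_sup_right))
  apply smul_cancel hA (inv_pos.2 hr)
  rw [smul_smul, inv_mul_cancel₀ hr.ne', one_smul]
  refine sup_le ?_ ?_
  · have := smul_le hA (le_of_lt (inv_pos.2 hr)) (le_sup_left (a := r • a) (b := r • b))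
    rwa [smul_smul, inv_mul_cancel₀ hr.ne', one_smul] at this
  · have := smul_le hA (le_of_lt (inv_pos.2 hr)) (le_sup_right (a := r • a) (b := r • b))
    rwa [smul_smul, inv_mul_cancel₀ hr.ne', one_smul] at this

theorem smul_abs (hA : IsBal A) {r : ℝ} (hr : 0 < r) (a : A) : |r • a| = r • |a| := by
  rw [show |a| = a ⊔ -a from rfl, smul_sup hA hr, smul_neg]; rfl

theorem smul_posPart (hA : IsBal A) {r : ℝ} (hr : 0 < r) (a : A) : (r • a)⁺ = r • a⁺ := by
  rw [posPart_def, posPart_def, smul_sup hA hr, smul_zero]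

theorem mul_le_mul_left' (hA : IsBal A) {a b : A} (h : a ≤ b) {c : A} (hc : 0 ≤ c) :
    c * a ≤ c * b := by
  haveI := cov hA
  have := hA.mul_nonneg c (b - a) hc (sub_nonneg.2 h)
  rw [mul_sub] at this
  exact sub_nonneg.1 this

theorem abs_mul_le' (hA : IsBal A) (u v : A) : |u * v| ≤ |u| * |v| := by
  haveI := cov hA; haveI := cov' hA
  have h1 : (0:A) ≤ u⁺ * v⁻ + u⁻ * v⁺ :=
    add_nonneg (hA.mul_nonneg _ _ (posPart_nonneg u) (negPart_nonneg v))
      (hA.mul_nonneg _ _ (negPart_nonneg u) (posPart_nonneg v))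
  have h2 : (0:A) ≤ u⁺ * v⁺ + u⁻ * v⁻ :=
    add_nonneg (hA.mul_nonneg _ _ (posPart_nonneg u) (posPart_nonneg v))
      (hA.mul_nonneg _ _ (negPart_nonneg u) (negPart_nonneg v))
  have hu := posPart_sub_negPart u
  have hv := posPart_sub_negPart v
  have hau := posPart_add_negPart u
  have hav := posPart_add_negPart v
  refine sup_le ?_ ?_
  · have : |u| * |v| - u * v = 2 * (u⁺ * v⁻ + u⁻ * v⁺) := by
      linear_combination (-(|v|)) * hau - (u⁺ + u⁻) * hav + v * hu + (u⁺ - u⁻) * hv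
    have h3 : (0:A) ≤ |u| * |v| - u * v := by
      rw [this, two_mul]; exact add_nonneg h1 h1
    exact sub_nonneg.1 h3
  · have : |u| * |v| - (-(u * v)) = 2 * (u⁺ * v⁺ + u⁻ * v⁻) := by
      linear_combination (-(|v|)) * hau - (u⁺ + u⁻) * hav - v * hu - (u⁺ - u⁻) * hv
    have h3 : (0:A) ≤ |u| * |v| - (-(u*v)) := by
      rw [this, two_mul]; exact add_nonneg h2 h2
    exact sub_nonneg.1 h3


theorem nsmul_nonneg' (hA : IsBal A) {a : A} (ha : 0 ≤ a) (n : ℕ) : 0 ≤ n • a := by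
  rw [← Nat.cast_smul_eq_nsmul ℝ n a]
  exact smul_nonneg hA (by positivity) ha

theorem riesz (hA : IsBal A) {u v w : A} (hu : 0 ≤ u) (hv : 0 ≤ v) (hw : 0 ≤ w) :
    u ⊓ (v + w) ≤ u ⊓ v + u ⊓ w := by
  haveI := cov hA; haveI := cov' hA
  have h : u ⊓ v + u ⊓ w = ((u + u) ⊓ (v + u)) ⊓ ((u + w) ⊓ (v + w)) := by
    rw [add_inf _ _ _, inf_add _ _ _, inf_add _ _ _]
  rw [h]
  refine le_inf (le_inf ?_ ?_) (le_inf ?_ ?_)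
  · exact inf_le_left.trans (le_add_of_nonneg_right hu)
  · exact inf_le_left.trans (le_add_of_nonneg_left hv)
  · exact inf_le_left.trans (le_add_of_nonneg_right hw)
  · exact inf_le_right

theorem inf_nsmul_eq_zero (hA : IsBal A) {u v : A} (hu : 0 ≤ u) (hv : 0 ≤ v)
    (h : u ⊓ v = 0) (n : ℕ) : u ⊓ (n • v) = 0 := by
  induction n with
  | zero => simpa using inf_eq_right.2 hu
  | succ n ih =>
      refine le_antisymm ?_ (le_inf hu (nsmul_nonneg' hA hv (n + 1)))
      have h2 : u ⊓ ((n : ℕ) • v + v) ≤ u ⊓ (n • v) + u ⊓ v :=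
        riesz hA hu (nsmul_nonneg' hA hv n) hv
      rw [ih, h, add_zero] at h2
      rwa [succ_nsmul]

theorem nsmul_inf_nsmul_eq_zero (hA : IsBal A) {u v : A} (hu : 0 ≤ u) (hv : 0 ≤ v)
    (h : u ⊓ v = 0) (n : ℕ) : (n • u) ⊓ (n • v) = 0 := by
  have h1 : v ⊓ (n • u) = 0 := inf_nsmul_eq_zero hA hv hu (by rwa [inf_comm]) n
  have h2 : (n • u) ⊓ (n • v) = 0 :=
    inf_nsmul_eq_zero hA (nsmul_nonneg' hA hu n) hv (by rwa [inf_comm]) n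
  exact h2

theorem posPart_lipschitz (hA : IsBal A) (u v : A) : |u⁺ - v⁺| ≤ |u - v| := by
  haveI := cov hA; haveI := cov' hA
  have key : ∀ x y : A, x⁺ - y⁺ ≤ |x - y| := by
    intro x y
    have h1 : x ≤ |x - y| + y⁺ := by
      calc x = (x - y) + y := by ring
      _ ≤ |x - y| + y⁺ := add_le_add (le_abs_self _) (le_posPart y)
    have h2 : (0:A) ≤ |x - y| + y⁺ := add_nonneg (abs_nonneg _) (posPart_nonneg y)
    exact sub_le_iff_le_add.2 (sup_le h1 h2)
  refine sup_le (key u v) ?_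
  rw [neg_sub]
  exact (key v u).trans_eq (abs_sub_comm v u)

theorem posPart_add_inf_eq (hA : IsBal A) (p q : A) : (p - q)⁺ + p ⊓ q = p := by
  haveI := cov hA; haveI := cov' hA
  have h1 : (p - q)⁺ = (p ⊔ q) - q := by
    rw [posPart_def, sup_sub _ _ _, sub_self]
  rw [h1]
  linear_combination inf_add_sup p q

theorem exists_bound (hA : IsBal A) (x : A) : ∃ N : ℕ, 1 ≤ N ∧ |x| ≤ (N : ℝ) • (1 : A) := by
  obtain ⟨N, hN1, hN⟩ := hA.strong_unit |x|
  exact ⟨N, hN1, by rwa [Nat.cast_smul_eq_nsmul ℝ N (1 : A)]⟩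

theorem smul_one_le_smul_one (hA : IsBal A) {r s : ℝ} (h : r ≤ s) : r • (1 : A) ≤ s • (1 : A) := by
  haveI := cov hA
  have : 0 ≤ (s - r) • (1 : A) := smul_nonneg hA (by linarith) (one_nonneg hA)
  rw [sub_smul] at this
  exact sub_nonneg.1 this

theorem one_le_cast_smul_one (hA : IsBal A) {N : ℕ} (hN : 1 ≤ N) : (1 : A) ≤ (N : ℝ) • (1 : A) := by
  have := smul_one_le_smul_one hA (show (1:ℝ) ≤ (N:ℝ) by exact_mod_cast hN)
  rwa [one_smul] at this


abbrev IsLIdeal' := @IsLIdeal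

/-- The ℓ-ideal generated by an ℓ-ideal `J` and a positive element `g`. -/
def balGen (hA : IsBal A) (J : Ideal A) (hJ : IsLIdeal' J) (g : A) : Ideal A where
  carrier := {x | ∃ b ∈ J, ∃ r : ℝ, 0 ≤ r ∧ |x| ≤ |b| + r • g}
  zero_mem' := ⟨0, J.zero_mem, 0, le_rfl, by simp⟩
  add_mem' := by
    haveI := cov hA; haveI := cov' hA
    rintro x y ⟨b₁, hb₁, r₁, hr₁, h₁⟩ ⟨b₂, hb₂, r₂, hr₂, h₂⟩
    have hb₁' : |b₁| ∈ J := hJ |b₁| b₁ hb₁ (le_of_eq (abs_abs b₁))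
    have hb₂' : |b₂| ∈ J := hJ |b₂| b₂ hb₂ (le_of_eq (abs_abs b₂))
    refine ⟨|b₁| + |b₂|, J.add_mem hb₁' hb₂', r₁ + r₂, by linarith, ?_⟩
    have habs : |(|b₁| + |b₂|)| = |b₁| + |b₂| :=
      abs_of_nonneg (add_nonneg (abs_nonneg b₁) (abs_nonneg b₂))
    calc |x + y| ≤ |x| + |y| := abs_add_le x y
      _ ≤ (|b₁| + r₁ • g) + (|b₂| + r₂ • g) := add_le_add h₁ h₂
      _ = |(|b₁| + |b₂|)| + (r₁ + r₂) • g := by rw [habs, add_smul]; ring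
  smul_mem' := by
    haveI := cov hA; haveI := cov' hA
    rintro t x ⟨b, hb, r, hr, h⟩
    obtain ⟨N, hN1, hNt⟩ := exists_bound hA t
    have hb' : |b| ∈ J := hJ |b| b hb (le_of_eq (abs_abs b))
    have hbJ : ((N : ℝ) • |b| : A) ∈ J := by
      rw [Algebra.smul_def]; exact J.mul_mem_left _ hb'
    refine ⟨(N : ℝ) • |b|, hbJ, (N : ℝ) * r, by positivity, ?_⟩
    have h1 : |t • x| ≤ (N : ℝ) • |x| := by
      have e1 : |t * x| ≤ |t| * |x| := abs_mul_le' hA t x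
      have e2 : |x| * |t| ≤ |x| * ((N : ℝ) • 1) := mul_le_mul_left' hA hNt (abs_nonneg x)
      have e3 : |x| * ((N : ℝ) • 1) = (N : ℝ) • |x| := by
        rw [mul_smul_comm, mul_one]
      calc |t • x| = |t * x| := by rw [smul_eq_mul]
        _ ≤ |t| * |x| := e1
        _ = |x| * |t| := mul_comm _ _
        _ ≤ (N : ℝ) • |x| := e3 ▸ e2
    have h2 : (N : ℝ) • |x| ≤ (N : ℝ) • |b| + ((N : ℝ) * r) • g := by
      have := smul_le hA (by positivity : (0:ℝ) ≤ (N:ℝ)) h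
      rwa [smul_add, smul_smul] at this
    have habs : |((N : ℝ) • |b| : A)| = (N : ℝ) • |b| :=
      abs_of_nonneg (smul_nonneg hA (by positivity) (abs_nonneg b))
    rw [habs]
    exact h1.trans h2

theorem balGen_isLIdeal (hA : IsBal A) (J : Ideal A) (hJ : IsLIdeal' J) (g : A) :
    IsLIdeal' (balGen hA J hJ g) := by
  rintro a b ⟨b₀, hb₀, r, hr, h⟩ hab
  exact ⟨b₀, hb₀, r, hr, le_trans hab h⟩

theorem le_balGen (hA : IsBal A) (J : Ideal A) (hJ : IsLIdeal' J) (g : A) :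
    J ≤ balGen hA J hJ g :=
  fun b hb => ⟨b, hb, 0, le_rfl, by simp⟩

theorem abs_zero' (hA : IsBal A) : |(0:A)| = 0 := by
  haveI := cov hA; haveI := cov' hA
  exact abs_of_nonneg le_rfl

theorem self_mem_balGen (hA : IsBal A) (J : Ideal A) (hJ : IsLIdeal' J) {g : A} (hg : 0 ≤ g) :
    g ∈ balGen hA J hJ g := by
  haveI := cov hA; haveI := cov' hA
  exact ⟨0, J.zero_mem, 1, zero_le_one, by
    rw [abs_of_nonneg hg, abs_zero' hA, zero_add, one_smul]⟩

/-- The uniform closure of an ideal. -/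
def balClosure (hA : IsBal A) (G : Ideal A) : Ideal A where
  carrier := {x | ∀ ε : ℝ, 0 < ε → ∃ y ∈ G, |x - y| ≤ ε • (1 : A)}
  zero_mem' := fun ε hε =>
    ⟨0, G.zero_mem, by
      rw [sub_zero, abs_zero' hA]
      exact smul_nonneg hA hε.le (one_nonneg hA)⟩
  add_mem' := by
    haveI := cov hA; haveI := cov' hA
    rintro x y hx hy ε hε
    obtain ⟨y₁, hy₁, h₁⟩ := hx (ε / 2) (by linarith)
    obtain ⟨y₂, hy₂, h₂⟩ := hy (ε / 2) (by linarith)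
    refine ⟨y₁ + y₂, G.add_mem hy₁ hy₂, ?_⟩
    calc |x + y - (y₁ + y₂)| = |(x - y₁) + (y - y₂)| := by ring_nf
      _ ≤ |x - y₁| + |y - y₂| := abs_add_le _ _
      _ ≤ (ε / 2) • (1:A) + (ε / 2) • (1:A) := add_le_add h₁ h₂
      _ = ε • (1:A) := by rw [← add_smul]; norm_num
  smul_mem' := by
    haveI := cov hA; haveI := cov' hA
    rintro t x hx ε hε
    obtain ⟨N, hN1, hNt⟩ := exists_bound hA t
    have hNpos : (0:ℝ) < N := by exact_mod_cast hN1
    obtain ⟨y, hyG, hy⟩ := hx (ε / N) (by positivity)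
    refine ⟨t * y, G.mul_mem_left t hyG, ?_⟩
    have h1 : |t • x - t * y| ≤ (N : ℝ) • |x - y| := by
      have e1 : |t * (x - y)| ≤ |t| * |x - y| := abs_mul_le' hA t (x - y)
      have e2 : |x - y| * |t| ≤ |x - y| * ((N : ℝ) • 1) :=
        mul_le_mul_left' hA hNt (abs_nonneg _)
      calc |t • x - t * y| = |t * (x - y)| := by rw [smul_eq_mul, ← mul_sub]
        _ ≤ |t| * |x - y| := e1
        _ = |x - y| * |t| := mul_comm _ _
        _ ≤ |x - y| * ((N : ℝ) • 1) := e2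
        _ = (N : ℝ) • |x - y| := by rw [mul_smul_comm, mul_one]
    have h2 : (N : ℝ) • |x - y| ≤ ε • (1:A) := by
      have := smul_le hA hNpos.le hy
      rwa [smul_smul, mul_div_cancel₀ ε hNpos.ne'] at this
    exact h1.trans h2

theorem mem_balGen_iff (hA : IsBal A) (J : Ideal A) (hJ : IsLIdeal' J) (g x : A) :
    x ∈ balGen hA J hJ g ↔ ∃ b ∈ J, ∃ r : ℝ, 0 ≤ r ∧ |x| ≤ |b| + r • g := Iff.rfl

theorem mem_balClosure_iff (hA : IsBal A) (G : Ideal A) (x : A) :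
    x ∈ balClosure hA G ↔ ∀ ε : ℝ, 0 < ε → ∃ y ∈ G, |x - y| ≤ ε • (1:A) := Iff.rfl

theorem le_balClosure (hA : IsBal A) (G : Ideal A) : G ≤ balClosure hA G :=
  fun x hx ε hε =>
    ⟨x, hx, by
      rw [sub_self, abs_zero' hA]
      exact smul_nonneg hA hε.le (one_nonneg hA)⟩

theorem balClosure_isLIdeal (hA : IsBal A) (G : Ideal A) (hG : IsLIdeal' G) :
    IsLIdeal' (balClosure hA G) := by
  haveI := cov hA; haveI := cov' hA
  rintro a b hb hab ε hε
  obtain ⟨y, hyG, hy⟩ := hb ε hε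
  set m := |y| with hm
  have hm0 : 0 ≤ m := abs_nonneg y
  have hab' : |a| ≤ |b| := hab
  set z := (a ⊔ -m) ⊓ m with hz
  have hz_le : z ≤ m := inf_le_right
  have hz_ge : -m ≤ z := le_inf le_sup_right ((neg_nonpos.2 hm0).trans hm0)
  have hz_ge' : -z ≤ m := by
    calc -z = -m + (m - z) := by ring
      _ ≤ z + (m - z) := add_le_add_left hz_ge _
      _ = m := by ring
  have hzy : |z| ≤ |y| := by
    rw [show |z| = z ⊔ -z from rfl]
    exact sup_le hz_le hz_ge'
  have hzG : z ∈ G := hG z y hyG hzy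
  refine ⟨z, hzG, ?_⟩
  have key : |a - z| ≤ (|b| - m)⁺ := by
    refine sup_le ?_ ?_
    · have h1 : a - z = (a - (a ⊔ -m)) ⊔ (a - m) := sub_inf _ _ _
      rw [h1]
      refine sup_le ?_ ?_
      · exact (sub_nonpos.2 le_sup_left).trans (posPart_nonneg _)
      · exact (sub_le_sub_right ((le_abs_self a).trans hab') m).trans (le_posPart _)
    · have h2 : -(a - z) = ((a ⊔ -m) - a) ⊓ (m - a) := by rw [neg_sub, hz]; exact inf_sub _ _ _
      rw [h2]
      refine inf_le_left.trans ?_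
      have h3 : (a ⊔ -m) - a = (0 : A) ⊔ (-m - a) := by
        rw [sup_sub _ _ _, sub_self]
      rw [h3]
      refine sup_le (posPart_nonneg _) ?_
      have h6 : -a ≤ |b| := (neg_le_abs a).trans hab'
      have h7 : -m - a ≤ |b| - m := by
        calc -m - a = -a + (-m) := by ring
          _ ≤ |b| + (-m) := add_le_add_left h6 _
          _ = |b| - m := by ring
      exact h7.trans (le_posPart _)
  have key2 : (|b| - m)⁺ ≤ |b - y| := by
    refine sup_le ?_ (abs_nonneg _)
    calc |b| - m ≤ |(|b| - |y|)| := le_abs_self _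
      _ ≤ |b - y| := abs_abs_sub_abs_le b y
  exact (key.trans (key2.trans hy))

theorem balClosure_isArch (hA : IsBal A) (G : Ideal A) :
    ∀ x w : A, (∀ n : ℕ, 1 ≤ n → (n • x - w) ⊔ 0 ∈ balClosure hA G) →
      x ⊔ 0 ∈ balClosure hA G := by
  haveI := cov hA; haveI := cov' hA
  intro x w h ε hε
  obtain ⟨N, hN1, hNw⟩ := exists_bound hA w
  obtain ⟨n₀, hn₀⟩ := exists_nat_ge (2 * N / ε)
  set n : ℕ := max 1 n₀ with hn
  have hn1 : 1 ≤ n := le_max_left _ _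
  have hnpos : (0:ℝ) < n := by exact_mod_cast hn1
  have hNn : (N : ℝ) / n ≤ ε / 2 := by
    rw [div_le_iff₀ hnpos]
    have h1 : 2 * (N:ℝ) / ε ≤ n := hn₀.trans (by exact_mod_cast le_max_right 1 n₀)
    rw [div_le_iff₀ hε] at h1
    linarith
  obtain ⟨y', hy'G, hy'⟩ := h n hn1 (n * ε / 2) (by positivity)
  set P : A := (n • x - w) ⊔ 0 with hP
  refine ⟨(n : ℝ)⁻¹ • y', by rw [Algebra.smul_def]; exact G.mul_mem_left _ hy'G, ?_⟩
  have claim1 : (n : ℝ)⁻¹ • P = (x - (n : ℝ)⁻¹ • w) ⊔ 0 := by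
    rw [hP, smul_sup hA (by positivity), smul_zero, smul_sub,
      ← Nat.cast_smul_eq_nsmul ℝ n x, smul_smul, inv_mul_cancel₀ hnpos.ne', one_smul]
  have step1 : |x ⊔ 0 - (n : ℝ)⁻¹ • P| ≤ (ε / 2) • (1:A) := by
    rw [claim1]
    have h1 : |x ⊔ 0 - ((x - (n : ℝ)⁻¹ • w) ⊔ 0)| ≤ |x - (x - (n : ℝ)⁻¹ • w)| :=
      posPart_lipschitz hA x _
    have h2 : |x - (x - (n : ℝ)⁻¹ • w)| = (n:ℝ)⁻¹ • |w| := by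
      rw [show x - (x - (n : ℝ)⁻¹ • w) = (n:ℝ)⁻¹ • w by ring, smul_abs hA (by positivity)]
    have h3 : (n:ℝ)⁻¹ • |w| ≤ (ε / 2) • (1:A) := by
      have h4 := smul_le hA (by positivity : (0:ℝ) ≤ (n:ℝ)⁻¹) hNw
      rw [smul_smul] at h4
      refine h4.trans ?_
      exact smul_one_le_smul_one hA (by rw [← div_eq_inv_mul]; exact hNn)
    exact h1.trans (h2 ▸ h3)
  have step2 : |(n : ℝ)⁻¹ • P - (n : ℝ)⁻¹ • y'| ≤ (ε / 2) • (1:A) := by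
    rw [← smul_sub, smul_abs hA (by positivity)]
    have h4 := smul_le hA (by positivity : (0:ℝ) ≤ (n:ℝ)⁻¹) hy'
    rw [smul_smul] at h4
    refine h4.trans (le_of_eq ?_)
    congr 1
    field_simp
  calc |x ⊔ 0 - (n : ℝ)⁻¹ • y'|
      = |(x ⊔ 0 - (n : ℝ)⁻¹ • P) + ((n : ℝ)⁻¹ • P - (n : ℝ)⁻¹ • y')| := by ring_nf
    _ ≤ |x ⊔ 0 - (n : ℝ)⁻¹ • P| + |(n : ℝ)⁻¹ • P - (n : ℝ)⁻¹ • y'| := abs_add_le _ _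
    _ ≤ (ε / 2) • (1:A) + (ε / 2) • (1:A) := add_le_add step1 step2
    _ = ε • (1:A) := by rw [← add_smul]; norm_num


end BalAux

/-- In a bal-algebra, if `I, J` are proper archimedean ℓ-ideals with `I ⊄ J`, then
there is a proper archimedean ℓ-ideal `K` with `J ⊆ K` and `K + I = A`. -/
theorem exists_proper_arch_add_eq_top {A : Type*} [CommRing A] [Lattice A]
    [Algebra ℝ A] (hA : IsBal A) (I J : Ideal A)
    (hI : IsLIdeal I) (hIa : IsArchLIdeal I) (hIp : I ≠ ⊤)
    (hJ : IsLIdeal J) (hJa : IsArchLIdeal J) (hJp : J ≠ ⊤)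
    (hIJ : ¬ I ≤ J) :
    ∃ K : Ideal A, IsLIdeal K ∧ IsArchLIdeal K ∧ K ≠ ⊤ ∧ J ≤ K ∧ K + I = ⊤ := by
  classical
  haveI := BalAux.cov hA; haveI := BalAux.cov' hA
  have hJ' : BalAux.IsLIdeal' J := hJ
  have hI' : BalAux.IsLIdeal' I := hI
  -- Step 1: an element of I not in J, made nonnegative
  obtain ⟨a₀, ha₀I, ha₀J⟩ := SetLike.not_le_iff_exists.1 hIJ
  set a₁ : A := |a₀| with ha₁def
  have ha₁I : a₁ ∈ I := hI' a₁ a₀ ha₀I (le_of_eq (abs_abs a₀))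
  have ha₁J : a₁ ∉ J := fun h => ha₀J (hJ' a₀ a₁ h (le_of_eq (abs_abs a₀).symm))
  have ha₁nn : 0 ≤ a₁ := abs_nonneg a₀
  -- Step 2: use archimedeanness of J to find d ∉ J
  have hsup : a₁ ⊔ 0 = a₁ := sup_eq_left.2 ha₁nn
  have hM : ∃ M : ℕ, 1 ≤ M ∧ (M • a₁ - 1) ⊔ 0 ∉ J := by
    by_contra hc
    push_neg at hc
    exact ha₁J (hsup ▸ hJa a₁ 1 hc)
  obtain ⟨M, hM1, hdJ₀⟩ := hM
  set a : A := (M : ℝ) • a₁ with hadef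
  have hMa : M • a₁ = a := (Nat.cast_smul_eq_nsmul ℝ M a₁).symm
  set d : A := (a - 1) ⊔ 0 with hddef
  have hdJ : d ∉ J := by rwa [hMa] at hdJ₀
  have ha_nn : 0 ≤ a := BalAux.smul_nonneg hA (by positivity) ha₁nn
  have haI : a ∈ I := by rw [hadef, Algebra.smul_def]; exact I.mul_mem_left _ ha₁I
  have hd0 : 0 ≤ d := le_sup_right
  -- Step 3: the element c
  set c : A := (1 - (2:ℝ) • a) ⊔ 0 with hcdef
  have hc0 : 0 ≤ c := le_sup_right
  have hc1 : c ≤ 1 := by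
    refine sup_le ?_ (BalAux.one_nonneg hA)
    exact sub_le_self _ (BalAux.smul_nonneg hA (by norm_num) ha_nn)
  -- c ⊓ d = 0
  have ha2 : a ≤ (2:ℝ) • a := by
    have h := BalAux.smul_nonneg hA (by norm_num : (0:ℝ) ≤ 2 - 1) ha_nn
    rw [sub_smul, one_smul] at h
    calc a = a + 0 := by ring
      _ ≤ a + ((2:ℝ) • a - a) := add_le_add_right h _
      _ = (2:ℝ) • a := by ring
  have hcd : c ⊓ d = 0 := by
    have h1 : d ≤ (1 - (2:ℝ) • a)⁻ := by
      rw [negPart_def, neg_sub]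
      exact sup_le_sup_right (sub_le_sub_right ha2 1) 0
    have h2 : c ⊓ d ≤ (1 - (2:ℝ) • a)⁺ ⊓ (1 - (2:ℝ) • a)⁻ :=
      inf_le_inf (le_of_eq rfl) h1
    rw [posPart_inf_negPart_eq_zero] at h2
    exact le_antisymm h2 (le_inf hc0 hd0)
  -- c * d = 0
  obtain ⟨N, hN1, hNd⟩ := BalAux.exists_bound hA d
  have hNd' : d ≤ (N:ℝ) • (1:A) := (le_abs_self d).trans hNd
  have hcN : c ≤ (N:ℝ) • (1:A) := hc1.trans (BalAux.one_le_cast_smul_one hA hN1)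
  have hcd0 : c * d = 0 := by
    have h1 : c * d ≤ (N:ℝ) • d := by
      have := hA.mul_nonneg ((N:ℝ) • (1:A) - c) d (sub_nonneg.2 hcN) hd0
      rw [sub_mul, smul_mul_assoc, one_mul] at this
      exact sub_nonneg.1 this
    have h2 : c * d ≤ (N:ℝ) • c := by
      have := hA.mul_nonneg ((N:ℝ) • (1:A) - d) c (sub_nonneg.2 hNd') hc0
      rw [sub_mul, smul_mul_assoc, one_mul, mul_comm d c] at this
      exact sub_nonneg.1 this
    have h3 : ((N:ℝ) • c) ⊓ ((N:ℝ) • d) = 0 := by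
      rw [Nat.cast_smul_eq_nsmul ℝ N c, Nat.cast_smul_eq_nsmul ℝ N d]
      exact BalAux.nsmul_inf_nsmul_eq_zero hA hc0 hd0 hcd N
    have h4 : c * d ≤ 0 := by
      have := le_inf h2 h1
      rwa [h3] at this
    exact le_antisymm h4 (hA.mul_nonneg c d hc0 hd0)
  -- the ideals G and K
  set G : Ideal A := BalAux.balGen hA J hJ' c with hGdef
  set K : Ideal A := BalAux.balClosure hA G with hKdef
  have hKL : IsLIdeal K := BalAux.balClosure_isLIdeal hA G (BalAux.balGen_isLIdeal hA J hJ' c)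
  have hKA : IsArchLIdeal K := BalAux.balClosure_isArch hA G
  have hJG : J ≤ G := BalAux.le_balGen hA J hJ' c
  have hGK : G ≤ K := BalAux.le_balClosure hA G
  have hcG : c ∈ G := BalAux.self_mem_balGen hA J hJ' hc0
  -- K is proper
  have hKtop : K ≠ ⊤ := by
    intro htop
    have h1 : (1:A) ∈ K := htop ▸ Submodule.mem_top
    rw [hKdef, BalAux.mem_balClosure_iff] at h1
    obtain ⟨y, hyG, hy⟩ := h1 (1/2) (by norm_num)
    rw [hGdef, BalAux.mem_balGen_iff] at hyG
    obtain ⟨b, hbJ, r, hr0, hyb⟩ := hyG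
    have hbJ' : |b| ∈ J := hJ' |b| b hbJ (le_of_eq (abs_abs b))
    have e1 : (1:A) - y ≤ (1/2:ℝ) • (1:A) := (le_abs_self _).trans hy
    have e2 : (1:A) ≤ |b| + r • c + (1/2:ℝ) • (1:A) := by
      calc (1:A) = y + (1 - y) := by ring
        _ ≤ |y| + (1/2:ℝ) • (1:A) := add_le_add (le_abs_self y) e1
        _ ≤ (|b| + r • c) + (1/2:ℝ) • (1:A) := add_le_add_left hyb _
    have e3 : (1/2:ℝ) • (1:A) ≤ |b| + r • c := by
      have h5 : (1:A) - (1/2:ℝ) • (1:A) = (1/2:ℝ) • (1:A) := by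
        have h5' : ((1:ℝ) - 1/2) • (1:A) = (1/2:ℝ) • (1:A) := by norm_num
        rw [sub_smul, one_smul] at h5'
        exact h5'
      calc (1/2:ℝ) • (1:A) = 1 - (1/2:ℝ) • (1:A) := h5.symm
        _ ≤ (|b| + r • c + (1/2:ℝ) • (1:A)) - (1/2:ℝ) • (1:A) := sub_le_sub_right e2 _
        _ = |b| + r • c := by ring
    have e4 : (1:A) ≤ (2:ℝ) • |b| + (2*r) • c := by
      have h6 := BalAux.smul_le hA (by norm_num : (0:ℝ) ≤ 2) e3
      rw [smul_add, smul_smul, smul_smul] at h6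
      norm_num at h6
      calc (1:A) = (1:ℝ) • (1:A) := (one_smul ℝ (1:A)).symm
        _ ≤ (2:ℝ) • |b| + (2*r) • c := by
          convert h6 using 2 <;> norm_num
    have e5 : d ≤ (2:ℝ) • (d * |b|) := by
      have h7 := BalAux.mul_le_mul_left' hA e4 hd0
      rw [mul_one, mul_add, mul_smul_comm, mul_smul_comm, mul_comm d c, hcd0, smul_zero,
        add_zero] at h7
      exact h7
    have e6 : ((2:ℝ) • (d * |b|) : A) ∈ J := by
      rw [Algebra.smul_def]
      exact J.mul_mem_left _ (J.mul_mem_left d hbJ')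
    have e7 : d ∈ J := by
      have hw0 : 0 ≤ ((2:ℝ) • (d * |b|) : A) :=
        BalAux.smul_nonneg hA (by norm_num) (hA.mul_nonneg d |b| hd0 (abs_nonneg b))
      refine hJ' d _ e6 ?_
      have : |d| ≤ |((2:ℝ) • (d * |b|) : A)| := by
        rw [abs_of_nonneg hd0, abs_of_nonneg hw0]
        exact e5
      exact this
    exact hdJ e7
  -- K + I = ⊤
  have hsumtop : K + I = ⊤ := by
    set e : A := (1:A) ⊓ ((2:ℝ) • a) with hedef
    have he0 : 0 ≤ e := le_inf (BalAux.one_nonneg hA) (BalAux.smul_nonneg hA (by norm_num) ha_nn)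
    have h2aI : ((2:ℝ) • a : A) ∈ I := by
      rw [Algebra.smul_def]; exact I.mul_mem_left _ haI
    have h2a0 : 0 ≤ ((2:ℝ) • a : A) := BalAux.smul_nonneg hA (by norm_num) ha_nn
    have heI : e ∈ I := by
      refine hI' e _ h2aI ?_
      have : |e| ≤ |((2:ℝ) • a : A)| := by
        rw [abs_of_nonneg he0, abs_of_nonneg h2a0]
        exact inf_le_right
      exact this
    have hsum : c + e = 1 := by
      have := BalAux.posPart_add_inf_eq hA (1:A) ((2:ℝ) • a)
      exact this
    rw [Ideal.eq_top_iff_one, Submodule.add_eq_sup]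
    exact Submodule.mem_sup.2 ⟨c, hGK hcG, e, heI, hsum⟩
  exact ⟨K, hKL, hKA, hKtop, hJG.trans hGK, hsumtop⟩
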